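/- Suppose the IV assumptions and positivity hold, δ^D ≠ 0, and there is no additive U–Z interaction in the treatment model, i.e. for every u ∈ 𝒰, E[D | Z=1, U=u] − E[D | Z=0, U=u] = δ^D. Then the Wald estimand identifies the average treatment effect: δ^Y / δ^D = E[Y1 − Y0]. -/

import Mathlib

open MeasureTheory ProbabilityTheory

lemma my_integral_partition {Ω : Type*} [MeasurableSpace Ω] (μ : Measure Ω)
    {𝒰 : Type*} [Fintype 𝒰] [MeasurableSpace 𝒰] [MeasurableSingletonClass 𝒰]
    {U : Ω → 𝒰} (hU : Measurable U) {f : Ω → ℝ} (hf : Integrable f μ)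
    {s : Set Ω} (hs : MeasurableSet s) :
    ∫ ω in s, f ω ∂μ = ∑ u : 𝒰, ∫ ω in s ∩ {ω | U ω = u}, f ω ∂μ := by
  classical
  have hB : ∀ u : 𝒰, MeasurableSet {ω | U ω = u} :=
    fun u => hU (measurableSet_singleton u)
  rw [← integral_indicator hs]
  have h2 : ∀ u : 𝒰, ∫ ω in s ∩ {ω | U ω = u}, f ω ∂μ
      = ∫ ω, Set.indicator (s ∩ {ω | U ω = u}) f ω ∂μ :=
    fun u => (integral_indicator (hs.inter (hB u))).symm
  simp_rw [h2]
  rw [← integral_finset_sum]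
  · congr 1
    funext ω
    rw [Finset.sum_eq_single (U ω)]
    · by_cases h : ω ∈ s
      · have hmem : ω ∈ s ∩ {ω' | U ω' = U ω} := ⟨h, rfl⟩
        rw [Set.indicator_of_mem h, Set.indicator_of_mem hmem]
      · rw [Set.indicator_of_notMem h, Set.indicator_of_notMem (fun hh => h hh.1)]
    · intro u _ hu
      exact Set.indicator_of_notMem (fun hh => hu hh.2.symm) _
    · intro h
      exact absurd (Finset.mem_univ _) h
  · intro u _
    exact hf.indicator (hs.inter (hB u))

lemma my_setIntegral_cond {Ω : Type*} [MeasurableSpace Ω] (μ : Measure Ω)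
    {t : Set Ω} (s : Set Ω) (hs : MeasurableSet s) (f : Ω → ℝ) :
    ∫ ω in s, f ω ∂(μ[|t]) = (μ t).toReal⁻¹ * ∫ ω in s ∩ t, f ω ∂μ := by
  rw [show μ[|t] = (μ t)⁻¹ • μ.restrict t from rfl, Measure.restrict_smul,
    Measure.restrict_restrict hs, integral_smul_measure, ENNReal.toReal_inv,
    smul_eq_mul]

lemma my_integrable_cond {Ω : Type*} [MeasurableSpace Ω] {μ : Measure Ω}
    {t : Set Ω} {f : Ω → ℝ} (hf : Integrable f μ) :
    Integrable f (μ[|t]) := by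
  rw [show μ[|t] = (μ t)⁻¹ • μ.restrict t from rfl]
  rcases eq_or_ne (μ t) 0 with h | h
  · simp [Measure.restrict_eq_zero.mpr h]
  · exact (hf.restrict).smul_measure (by simp [h])


/-- Conditional mean of `W` given event `A`: `E[W | A] = (∫_A W dμ) / μ(A)`. -/
noncomputable def condMean {Ω : Type*} [MeasurableSpace Ω] (μ : Measure Ω)
    (W : Ω → ℝ) (A : Set Ω) : ℝ :=
  (∫ ω in A, W ω ∂μ) / (μ A).toReal

/-- under the IV assumptions, positivity, `δ^D ≠ 0` and no additive
`U`–`Z` interaction in the treatment model (A5.a), the Wald estimand `δ^Y / δ^D`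
identifies the average treatment effect `E[Y1 − Y0]`. -/
theorem wald_identifies_ate_no_UZ_interaction
    {Ω : Type*} [MeasurableSpace Ω] (μ : Measure Ω) [IsProbabilityMeasure μ]
    {𝒰 : Type*} [Fintype 𝒰] [MeasurableSpace 𝒰] [MeasurableSingletonClass 𝒰]
    (Z D Y1 Y0 Y : Ω → ℝ) (U : Ω → 𝒰)
    (hZmeas : Measurable Z) (hDmeas : Measurable D) (hUmeas : Measurable U)
    (hZ01 : ∀ ω, Z ω = 0 ∨ Z ω = 1) (hD01 : ∀ ω, D ω = 0 ∨ D ω = 1)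
    (hY1int : Integrable Y1 μ) (hY0int : Integrable Y0 μ)
    (hYdef : ∀ ω, Y ω = D ω * Y1 ω + (1 - D ω) * Y0 ω)
    (hUpos : ∀ u : 𝒰, 0 < μ {ω | U ω = u})
    -- (A2) Z is independent of U
    (hA2 : ∀ (z : ℝ) (u : 𝒰),
      μ ({ω | Z ω = z} ∩ {ω | U ω = u}) = μ {ω | Z ω = z} * μ {ω | U ω = u})
    -- (A1′, A4) under μ(· | U = u), each potential outcome is independent of (Z, D)
    (hA14one : ∀ u : 𝒰, IndepFun Y1 (fun ω => (Z ω, D ω)) (μ[|{ω | U ω = u}]))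
    (hA14zero : ∀ u : 𝒰, IndepFun Y0 (fun ω => (Z ω, D ω)) (μ[|{ω | U ω = u}]))
    -- positivity
    (hPos : ∀ (z : ℝ), (z = 0 ∨ z = 1) → ∀ (u : 𝒰),
      0 < μ ({ω | Z ω = z} ∩ {ω | U ω = u}))
    -- δ^Y and δ^D
    (δY δD : ℝ)
    (hδY : δY = condMean μ Y {ω | Z ω = 1} - condMean μ Y {ω | Z ω = 0})
    (hδD : δD = condMean μ D {ω | Z ω = 1} - condMean μ D {ω | Z ω = 0})
    (hδDne : δD ≠ 0)
    -- (A5.a) no additive U–Z interaction in the treatment model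
    (hA5a : ∀ u : 𝒰,
      condMean μ D ({ω | Z ω = 1} ∩ {ω | U ω = u})
        - condMean μ D ({ω | Z ω = 0} ∩ {ω | U ω = u}) = δD) :
    δY / δD = ∫ ω, (Y1 ω - Y0 ω) ∂μ := by
  classical
  have hAmeas : ∀ z : ℝ, MeasurableSet {ω | Z ω = z} :=
    fun z => hZmeas (measurableSet_singleton z)
  have hBmeas : ∀ u : 𝒰, MeasurableSet {ω | U ω = u} :=
    fun u => hUmeas (measurableSet_singleton u)
  haveI : Nonempty 𝒰 := by
    by_contra h
    rw [not_nonempty_iff] at h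
    haveI : IsEmpty Ω := Function.isEmpty U
    have h1 : μ Set.univ = 1 := measure_univ
    rw [Set.univ_eq_empty_iff.mpr ‹IsEmpty Ω›] at h1
    simp at h1
  set b : 𝒰 → ℝ := fun u => (μ {ω | U ω = u}).toReal with hbdef
  have hbpos : ∀ u, 0 < b u :=
    fun u => ENNReal.toReal_pos (hUpos u).ne' (measure_ne_top μ _)
  set a : ℝ → ℝ := fun z => (μ {ω | Z ω = z}).toReal with hadef
  have hapos : ∀ z : ℝ, z = 0 ∨ z = 1 → 0 < a z := by
    intro z hz
    obtain ⟨u⟩ := ‹Nonempty 𝒰›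
    exact ENNReal.toReal_pos
      (ne_of_gt (lt_of_lt_of_le (hPos z hz u) (measure_mono Set.inter_subset_left)))
      (measure_ne_top μ _)
  have hc : ∀ (z : ℝ) (u : 𝒰),
      (μ ({ω | Z ω = z} ∩ {ω | U ω = u})).toReal = a z * b u := by
    intro z u
    rw [hA2]
    exact ENNReal.toReal_mul
  -- integrability facts
  have hDbd : ∀ ω, ‖D ω‖ ≤ 1 := by
    intro ω; rcases hD01 ω with h | h <;> simp [h]
  have h1Dbd : ∀ ω, ‖1 - D ω‖ ≤ 1 := by
    intro ω; rcases hD01 ω with h | h <;> simp [h]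
  have hDY1 : Integrable (fun ω => D ω * Y1 ω) μ :=
    hY1int.bdd_mul hDmeas.aestronglyMeasurable (ae_of_all _ hDbd)
  have h1DY0 : Integrable (fun ω => (1 - D ω) * Y0 ω) μ :=
    hY0int.bdd_mul (measurable_const.sub hDmeas).aestronglyMeasurable (ae_of_all _ h1Dbd)
  have hYeq : Y = fun ω => D ω * Y1 ω + (1 - D ω) * Y0 ω := funext hYdef
  have hYint : Integrable Y μ := by rw [hYeq]; exact hDY1.add h1DY0
  have hDint : Integrable D μ :=
    (integrable_const (1 : ℝ)).mono' hDmeas.aestronglyMeasurable (ae_of_all _ hDbd)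
  -- abbreviations
  set M1 : 𝒰 → ℝ := fun u => ∫ ω in {ω | U ω = u}, Y1 ω ∂μ with hM1def
  set M0 : 𝒰 → ℝ := fun u => ∫ ω in {ω | U ω = u}, Y0 ω ∂μ with hM0def
  set p : ℝ → 𝒰 → ℝ := fun z u => condMean μ D ({ω | Z ω = z} ∩ {ω | U ω = u}) with hpdef
  -- key computation: set integral of Y over {Z = z} ∩ {U = u}
  have key : ∀ (u : 𝒰) (z : ℝ), z = 0 ∨ z = 1 →
      ∫ ω in {ω | Z ω = z} ∩ {ω | U ω = u}, Y ω ∂μ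
        = a z * (M1 u * p z u + M0 u * (1 - p z u)) := by
    intro u z hz
    set t : Set Ω := {ω | U ω = u} with htdef
    set s : Set Ω := {ω | Z ω = z} with hsdef
    have hsm : MeasurableSet s := hAmeas z
    have htm : MeasurableSet t := hBmeas u
    -- the functions g1, g0 of (Z, D)
    set g1 : ℝ × ℝ → ℝ := fun pr => pr.2 * Set.indicator {z} (fun _ => (1:ℝ)) pr.1 with hg1def
    set g0 : ℝ × ℝ → ℝ := fun pr => (1 - pr.2) * Set.indicator {z} (fun _ => (1:ℝ)) pr.1 with hg0def
    have hindm : Measurable (Set.indicator {z} (fun _ => (1:ℝ))) :=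
      measurable_const.indicator (measurableSet_singleton z)
    have hg1m : Measurable g1 := measurable_snd.mul (hindm.comp measurable_fst)
    have hg0m : Measurable g0 :=
      (measurable_const.sub measurable_snd).mul (hindm.comp measurable_fst)
    have hZD : Measurable (fun ω => (Z ω, D ω)) := hZmeas.prodMk hDmeas
    have hg1c : Measurable (fun ω => g1 (Z ω, D ω)) := hg1m.comp hZD
    have hg0c : Measurable (fun ω => g0 (Z ω, D ω)) := hg0m.comp hZD
    -- bounds
    have hg1bd : ∀ ω, ‖g1 (Z ω, D ω)‖ ≤ 1 := by
      intro ω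
      rcases hD01 ω with h | h <;>
        by_cases hω : Z ω = z <;>
          simp [hg1def, h, hω, Set.indicator_of_mem, Set.indicator_of_notMem]
    have hg0bd : ∀ ω, ‖g0 (Z ω, D ω)‖ ≤ 1 := by
      intro ω
      rcases hD01 ω with h | h <;>
        by_cases hω : Z ω = z <;>
          simp [hg0def, h, hω, Set.indicator_of_mem, Set.indicator_of_notMem]
    -- pointwise identities
    have hind1 : ∀ ω, Set.indicator s D ω = g1 (Z ω, D ω) := by
      intro ω
      by_cases hω : Z ω = z
      · have : ω ∈ s := hω
        simp [Set.indicator_of_mem this, hg1def, hω]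
      · have : ω ∉ s := hω
        simp [Set.indicator_of_notMem this, hg1def, hω]
    have hind0 : ∀ ω, Set.indicator s (fun ω => 1 - D ω) ω = g0 (Z ω, D ω) := by
      intro ω
      by_cases hω : Z ω = z
      · have : ω ∈ s := hω
        simp [Set.indicator_of_mem this, hg0def, hω]
      · have : ω ∉ s := hω
        simp [Set.indicator_of_notMem this, hg0def, hω]
    have hindY : ∀ ω, Set.indicator s Y ω
        = Y1 ω * g1 (Z ω, D ω) + Y0 ω * g0 (Z ω, D ω) := by
      intro ω
      by_cases hω : Z ω = z
      · have hmem : ω ∈ s := hω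
        simp only [Set.indicator_of_mem hmem, hg1def, hg0def, hω,
          Set.indicator_of_mem (Set.mem_singleton z), hYdef ω]
        ring
      · have hmem : ω ∉ s := hω
        have hzz : Z ω ∉ ({z} : Set ℝ) := hω
        simp only [Set.indicator_of_notMem hmem, hg1def, hg0def]
        rw [Set.indicator_of_notMem hzz]
        ring
    -- integrability under ν
    have hY1ν : Integrable Y1 (μ[|t]) := my_integrable_cond hY1int
    have hY0ν : Integrable Y0 (μ[|t]) := my_integrable_cond hY0int
    have hDν : Integrable D (μ[|t]) := my_integrable_cond hDint
    have hY1g1 : Integrable (fun ω => Y1 ω * g1 (Z ω, D ω)) (μ[|t]) := by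
      refine hY1ν.norm.mono' (hY1ν.aestronglyMeasurable.mul hg1c.aestronglyMeasurable)
        (ae_of_all _ fun ω => ?_)
      calc ‖Y1 ω * g1 (Z ω, D ω)‖ = ‖Y1 ω‖ * ‖g1 (Z ω, D ω)‖ := norm_mul _ _
        _ ≤ ‖Y1 ω‖ * 1 := by
            exact mul_le_mul_of_nonneg_left (hg1bd ω) (norm_nonneg _)
        _ = ‖Y1 ω‖ := mul_one _
    have hY0g0 : Integrable (fun ω => Y0 ω * g0 (Z ω, D ω)) (μ[|t]) := by
      refine hY0ν.norm.mono' (hY0ν.aestronglyMeasurable.mul hg0c.aestronglyMeasurable)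
        (ae_of_all _ fun ω => ?_)
      calc ‖Y0 ω * g0 (Z ω, D ω)‖ = ‖Y0 ω‖ * ‖g0 (Z ω, D ω)‖ := norm_mul _ _
        _ ≤ ‖Y0 ω‖ * 1 := by
            exact mul_le_mul_of_nonneg_left (hg0bd ω) (norm_nonneg _)
        _ = ‖Y0 ω‖ := mul_one _
    -- independence and factorization
    have ind1 : IndepFun Y1 (fun ω => g1 (Z ω, D ω)) (μ[|t]) :=
      (hA14one u).comp measurable_id hg1m
    have ind0 : IndepFun Y0 (fun ω => g0 (Z ω, D ω)) (μ[|t]) :=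
      (hA14zero u).comp measurable_id hg0m
    have prod1 : ∫ ω, Y1 ω * g1 (Z ω, D ω) ∂(μ[|t])
        = (∫ ω, Y1 ω ∂(μ[|t])) * ∫ ω, g1 (Z ω, D ω) ∂(μ[|t]) :=
      ind1.integral_mul_eq_mul_integral hY1ν.aestronglyMeasurable hg1c.aestronglyMeasurable
    have prod0 : ∫ ω, Y0 ω * g0 (Z ω, D ω) ∂(μ[|t])
        = (∫ ω, Y0 ω ∂(μ[|t])) * ∫ ω, g0 (Z ω, D ω) ∂(μ[|t]) :=
      ind0.integral_mul_eq_mul_integral hY0ν.aestronglyMeasurable hg0c.aestronglyMeasurable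
    -- step 1 : ν-integral decomposition
    have step1 : ∫ ω in s, Y ω ∂(μ[|t])
        = (∫ ω, Y1 ω ∂(μ[|t])) * (∫ ω in s, D ω ∂(μ[|t]))
          + (∫ ω, Y0 ω ∂(μ[|t])) * (∫ ω in s, (1 - D ω) ∂(μ[|t])) := by
      rw [← integral_indicator hsm]
      have e1 : ∫ ω in s, D ω ∂(μ[|t]) = ∫ ω, g1 (Z ω, D ω) ∂(μ[|t]) := by
        rw [← integral_indicator hsm]
        exact integral_congr_ae (ae_of_all _ hind1)
      have e0 : ∫ ω in s, (1 - D ω) ∂(μ[|t]) = ∫ ω, g0 (Z ω, D ω) ∂(μ[|t]) := by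
        rw [← integral_indicator hsm]
        exact integral_congr_ae (ae_of_all _ hind0)
      rw [e1, e0, ← prod1, ← prod0, ← integral_add hY1g1 hY0g0]
      exact integral_congr_ae (ae_of_all _ hindY)
    -- conversion between ν- and μ- integrals
    have conv : ∀ (f : Ω → ℝ), ∫ ω in s, f ω ∂(μ[|t]) = (b u)⁻¹ * ∫ ω in s ∩ t, f ω ∂μ := by
      intro f
      rw [my_setIntegral_cond μ s hsm f]
    have convU : ∀ (f : Ω → ℝ), ∫ ω, f ω ∂(μ[|t]) = (b u)⁻¹ * ∫ ω in t, f ω ∂μ := by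
      intro f
      calc ∫ ω, f ω ∂(μ[|t]) = ∫ ω in Set.univ, f ω ∂(μ[|t]) := by rw [setIntegral_univ]
        _ = (μ t).toReal⁻¹ * ∫ ω in Set.univ ∩ t, f ω ∂μ :=
            my_setIntegral_cond μ Set.univ MeasurableSet.univ f
        _ = (b u)⁻¹ * ∫ ω in t, f ω ∂μ := by rw [Set.univ_inter]
    -- D-integral over s ∩ t
    have hc' : (μ (s ∩ t)).toReal = a z * b u := hc z u
    have hq : ∫ ω in s ∩ t, D ω ∂μ = p z u * (a z * b u) := by
      have hcm : p z u = (∫ ω in s ∩ t, D ω ∂μ) / (a z * b u) := by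
        rw [show p z u = (∫ ω in s ∩ t, D ω ∂μ) / (μ (s ∩ t)).toReal from rfl, hc']
      rw [hcm, div_mul_cancel₀ _ (mul_pos (hapos z hz) (hbpos u)).ne']
    have h1q : ∫ ω in s ∩ t, (1 - D ω) ∂μ = a z * b u - p z u * (a z * b u) := by
      have hint1 : IntegrableOn (fun _ : Ω => (1:ℝ)) (s ∩ t) μ :=
        integrableOn_const (measure_ne_top μ _)
      have : ∫ ω in s ∩ t, (1 - D ω) ∂μ
          = (∫ ω in s ∩ t, (1:ℝ) ∂μ) - ∫ ω in s ∩ t, D ω ∂μ :=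
        integral_sub hint1 (hDint.restrict)
      rw [this, hq, setIntegral_const, smul_eq_mul, mul_one, measureReal_def, hc']
    -- putting it together
    have main : ∫ ω in s ∩ t, Y ω ∂μ = b u * ∫ ω in s, Y ω ∂(μ[|t]) := by
      rw [conv Y, ← mul_assoc, mul_inv_cancel₀ (hbpos u).ne', one_mul]
    rw [main, step1, conv D, conv (fun ω => 1 - D ω), convU Y1, convU Y0, hq, h1q]
    have hM1 : ∫ ω in t, Y1 ω ∂μ = M1 u := rfl
    have hM0 : ∫ ω in t, Y0 ω ∂μ = M0 u := rfl
    rw [hM1, hM0]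
    have hbne : b u ≠ 0 := (hbpos u).ne'
    have hane : a z ≠ 0 := (hapos z hz).ne'
    field_simp
  -- sum over u
  have sumY : ∀ (z : ℝ), z = 0 ∨ z = 1 →
      condMean μ Y {ω | Z ω = z} = ∑ u : 𝒰, (M1 u * p z u + M0 u * (1 - p z u)) := by
    intro z hz
    have hpart := my_integral_partition μ hUmeas hYint (hAmeas z)
    simp only [condMean]
    rw [hpart]
    have : ∀ u : 𝒰, ∫ ω in {ω | Z ω = z} ∩ {ω | U ω = u}, Y ω ∂μ
        = a z * (M1 u * p z u + M0 u * (1 - p z u)) := fun u => key u z hz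
    simp_rw [this]
    rw [← Finset.mul_sum]
    rw [show (μ {ω | Z ω = z}).toReal = a z from rfl]
    rw [mul_div_cancel_left₀ _ (hapos z hz).ne']
  -- δY = δD * ∫ (Y1 - Y0)
  have hp : ∀ u : 𝒰, p 1 u - p 0 u = δD := fun u => hA5a u
  have hATE : ∫ ω, (Y1 ω - Y0 ω) ∂μ = ∑ u : 𝒰, (M1 u - M0 u) := by
    rw [integral_sub hY1int hY0int]
    have e1 : ∫ ω, Y1 ω ∂μ = ∑ u : 𝒰, M1 u := by
      rw [← setIntegral_univ, my_integral_partition μ hUmeas hY1int MeasurableSet.univ]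
      simp [Set.univ_inter]
      rfl
    have e0 : ∫ ω, Y0 ω ∂μ = ∑ u : 𝒰, M0 u := by
      rw [← setIntegral_univ, my_integral_partition μ hUmeas hY0int MeasurableSet.univ]
      simp [Set.univ_inter]
      rfl
    rw [e1, e0, ← Finset.sum_sub_distrib]
  have hδYeq : δY = δD * ∫ ω, (Y1 ω - Y0 ω) ∂μ := by
    rw [hδY, sumY 1 (Or.inr rfl), sumY 0 (Or.inl rfl), hATE, ← Finset.sum_sub_distrib,
      Finset.mul_sum]
    apply Finset.sum_congr rfl
    intro u _
    rw [← hp u]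
    ring
  rw [hδYeq, mul_comm, mul_div_assoc, div_self hδDne, mul_one]
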